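/- The complete generating function for quarter-plane walks with step set {NE, SW, N} = {(1,1),(-1,-1),(0,1)} is algebraic; explicitly, Q(x,y;t) = -( -1 + yt + √(1 - 2yt + t²y² - 4t²) ) / ( t·(2t - yx + y²xt + yx·√(1 - 2yt + t²y² - 4t²)) ). -/

import Mathlib

open Finset PowerSeries

/-- The partial sum of the first `k` steps of a walk. -/
def psum {n : ℕ} (w : Fin n → ℤ × ℤ) (k : ℕ) : ℤ × ℤ :=
  ∑ i ∈ Finset.univ.filter (fun i : Fin n => (i : ℕ) < k), w i

/-- A quarter-plane walk. -/
def IsQWalk (Y : Finset (ℤ × ℤ)) {n : ℕ} (w : Fin n → ℤ × ℤ) : Prop :=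
  (∀ i, w i ∈ Y) ∧ ∀ k, 0 ≤ (psum w k).1 ∧ 0 ≤ (psum w k).2

/-- The number of quarter-plane walks of length `n` ending at `p`. -/
noncomputable def walkCountEnd (Y : Finset (ℤ × ℤ)) (n : ℕ) (p : ℤ × ℤ) : ℕ :=
  Nat.card {w : Fin n → ℤ × ℤ // IsQWalk Y w ∧ psum w n = p}

/-- The ring `ℚ[x, 1/x, y, 1/y]` of Laurent polynomials in two variables. -/
abbrev R2 := AddMonoidAlgebra ℚ (ℤ × ℤ)

/-- The monomial `x^i y^j`. -/
noncomputable def mono (p : ℤ × ℤ) : R2 := AddMonoidAlgebra.single p 1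

/-- The complete generating function `Q(x,y;t) = ∑_{i,j,n} q(i,j,n) x^i y^j t^n`
of quarter-plane walks with steps from `Y`, an element of `R2⟦t⟧`. -/
noncomputable def Qgf (Y : Finset (ℤ × ℤ)) : PowerSeries R2 :=
  PowerSeries.mk fun n =>
    ∑ p ∈ Finset.Icc (0:ℤ) (n:ℤ) ×ˢ Finset.Icc (0:ℤ) (n:ℤ),
      AddMonoidAlgebra.single p ((walkCountEnd Y n p : ℚ))

namespace QW

open scoped Classical

noncomputable section

abbrev Ys : Finset (ℤ × ℤ) := {((1:ℤ),(1:ℤ)), (-1,-1), (0,1)}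

lemma mem_Ys {s : ℤ × ℤ} : s ∈ Ys ↔ s = (1,1) ∨ s = (-1,-1) ∨ s = (0,1) := by
  simp [Ys]

/-- walk condition for lists -/
def LW (l : List (ℤ × ℤ)) : Prop :=
  (∀ s ∈ l, s ∈ Ys) ∧ ∀ k, 0 ≤ ((l.take k).sum).1 ∧ 0 ≤ ((l.take k).sum).2

lemma snd_ge_fst {l : List (ℤ × ℤ)} (h : ∀ s ∈ l, s ∈ Ys) : (l.sum).1 ≤ (l.sum).2 := by
  induction l with
  | nil => simp
  | cons a t ih =>
    have ha := h a (by simp)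
    have ht := ih (fun s hs => h s (by simp [hs]))
    have : a.1 ≤ a.2 := by rcases mem_Ys.mp ha with rfl | rfl | rfl <;> norm_num
    simp only [List.sum_cons, Prod.fst_add, Prod.snd_add]
    omega

lemma sum_le_len {l : List (ℤ × ℤ)} (h : ∀ s ∈ l, s ∈ Ys) :
    (l.sum).1 ≤ l.length ∧ (l.sum).2 ≤ l.length := by
  induction l with
  | nil => simp
  | cons a t ih =>
    have ha := h a (by simp)
    have ht := ih (fun s hs => h s (by simp [hs]))
    have h1 : a.1 ≤ 1 ∧ a.2 ≤ 1 := by rcases mem_Ys.mp ha with rfl | rfl | rfl <;> norm_num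
    simp only [List.sum_cons, Prod.fst_add, Prod.snd_add, List.length_cons]
    push_cast
    omega

lemma LW_take {l : List (ℤ × ℤ)} (h : LW l) (m : ℕ) : LW (l.take m) := by
  refine ⟨fun s hs => h.1 s (List.take_subset m l hs), fun k => ?_⟩
  rw [List.take_take]
  exact h.2 _

lemma LW_of_fst {l : List (ℤ × ℤ)} (hmem : ∀ s ∈ l, s ∈ Ys)
    (h : ∀ k, 0 ≤ ((l.take k).sum).1) : LW l := by
  refine ⟨hmem, fun k => ⟨h k, ?_⟩⟩
  have := snd_ge_fst (fun s hs => hmem s (List.take_subset k l hs))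
  exact le_trans (h k) this

lemma psum_ofFn {n : ℕ} (w : Fin n → ℤ × ℤ) (k : ℕ) :
    psum w k = ((List.ofFn w).take k).sum := by
  induction k with
  | zero => simp [psum]
  | succ k ih =>
    by_cases h : k < n
    · have hset : (Finset.univ.filter fun i : Fin n => (i : ℕ) < k + 1)
          = insert ⟨k, h⟩ (Finset.univ.filter fun i : Fin n => (i : ℕ) < k) := by
        ext i
        simp only [Finset.mem_filter, Finset.mem_insert, Finset.mem_univ, true_and]
        constructor
        · intro hi
          rcases Nat.lt_succ_iff_lt_or_eq.mp hi with h' | h'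
          · exact Or.inr h'
          · exact Or.inl (Fin.ext h')
        · rintro (rfl | hi)
          · exact Nat.lt_succ_self k
          · exact Nat.lt_succ_of_lt hi
      have hlt : k < (List.ofFn w).length := by simpa using h
      rw [psum, hset, Finset.sum_insert (by simp), List.sum_take_succ _ _ hlt,
        List.getElem_ofFn]
      rw [psum] at ih
      rw [ih]
      exact add_comm _ _
    · have hset : (Finset.univ.filter fun i : Fin n => (i : ℕ) < k + 1)
          = (Finset.univ.filter fun i : Fin n => (i : ℕ) < k) := by
        ext i
        simp only [Finset.mem_filter, Finset.mem_univ, true_and]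
        have : (i : ℕ) < n := i.isLt
        omega
      have hlen : (List.ofFn w).length ≤ k := by simpa using Nat.le_of_not_lt h
      rw [psum, hset, List.take_of_length_le (le_trans hlen (Nat.le_succ k)),
        ← List.take_of_length_le hlen]
      exact ih

lemma isQWalk_iff {n : ℕ} (w : Fin n → ℤ × ℤ) : IsQWalk Ys w ↔ LW (List.ofFn w) := by
  unfold IsQWalk LW
  constructor
  · rintro ⟨h1, h2⟩
    refine ⟨?_, fun k => by rw [← psum_ofFn]; exact h2 k⟩
    intro s hs
    obtain ⟨i, rfl⟩ := List.mem_ofFn.mp hs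
    exact h1 i
  · rintro ⟨h1, h2⟩
    refine ⟨fun i => h1 _ (List.mem_ofFn.mpr ⟨i, rfl⟩), fun k => by
      rw [psum_ofFn]; exact h2 k⟩

end

end QW

namespace QW
open Finset PowerSeries
open scoped Classical
noncomputable section

def allLists : ℕ → Finset (List (ℤ × ℤ))
  | 0 => {[]}
  | n+1 => (Ys ×ˢ allLists n).image fun p => p.1 :: p.2

lemma mem_allLists (n : ℕ) : ∀ l, l ∈ allLists n ↔ l.length = n ∧ ∀ s ∈ l, s ∈ Ys := by
  induction n with
  | zero =>
    intro l
    simp only [allLists, Finset.mem_singleton]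
    constructor
    · rintro rfl; simp
    · rintro ⟨h, -⟩; exact List.length_eq_zero_iff.mp h
  | succ n ih =>
    intro l
    simp only [allLists, Finset.mem_image, Finset.mem_product]
    constructor
    · rintro ⟨⟨a, t⟩, ⟨ha, ht⟩, rfl⟩
      obtain ⟨hlen, hmem⟩ := (ih t).mp ht
      refine ⟨by simp [hlen], ?_⟩
      intro s hs
      rcases List.mem_cons.mp hs with rfl | hs
      · exact ha
      · exact hmem s hs
    · rintro ⟨hlen, hmem⟩
      cases l with
      | nil => simp at hlen
      | cons a t =>
        exact ⟨(a, t), ⟨hmem a (by simp), (ih t).mpr ⟨by simp at hlen; omega,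
          fun s hs => hmem s (by simp [hs])⟩⟩, rfl⟩

def allWalks (n : ℕ) : Finset (List (ℤ × ℤ)) := (allLists n).filter LW

lemma mem_allWalks {n : ℕ} {l : List (ℤ × ℤ)} :
    l ∈ allWalks n ↔ l.length = n ∧ LW l := by
  rw [allWalks, Finset.mem_filter, mem_allLists]
  constructor
  · rintro ⟨⟨h1, -⟩, h3⟩; exact ⟨h1, h3⟩
  · rintro ⟨h1, h3⟩; exact ⟨⟨h1, h3.1⟩, h3⟩

/-- number of walks by endpoint, list version -/
lemma walkCountEnd_eq (n : ℕ) (p : ℤ × ℤ) :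
    walkCountEnd Ys n p = ((allWalks n).filter (fun l => l.sum = p)).card := by
  rw [← Nat.card_eq_finsetCard]
  apply Nat.card_congr
  have key : ∀ w : Fin n → ℤ × ℤ, (IsQWalk Ys w ∧ psum w n = p) ↔
      (List.ofFn w ∈ (allWalks n).filter (fun l => l.sum = p)) := by
    intro w
    rw [Finset.mem_filter, mem_allWalks, isQWalk_iff]
    have hsum : psum w n = (List.ofFn w).sum := by
      rw [psum_ofFn, List.take_of_length_le (by simp)]
    constructor
    · rintro ⟨h1, h2⟩; exact ⟨⟨by simp, h1⟩, by rw [← hsum]; exact h2⟩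
    · rintro ⟨⟨-, h1⟩, h2⟩; exact ⟨h1, by rw [hsum]; exact h2⟩
  refine Equiv.ofBijective (fun w => ⟨List.ofFn w.1, (key _).mp w.2⟩) ⟨?_, ?_⟩
  · intro a b hab
    exact Subtype.ext (List.ofFn_injective (congrArg Subtype.val hab))
  · rintro ⟨l, hl⟩
    have hlen : l.length = n := (mem_allWalks.mp (Finset.mem_filter.mp hl).1).1
    subst hlen
    refine ⟨⟨fun i => l.get i, ?_⟩, ?_⟩
    · apply (key _).mpr
      rw [List.ofFn_get]
      exact hl
    · apply Subtype.ext
      simp only [List.get_eq_getElem]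
      exact List.ofFn_get l

def cF (n : ℕ) : R2 := ∑ l ∈ allWalks n, mono l.sum
def eF (n : ℕ) : R2 := ∑ l ∈ (allWalks n).filter (fun l => (l.sum).1 = 0), mono l.sum

lemma LW_sum_nonneg {n : ℕ} {l : List (ℤ × ℤ)} (h : l ∈ allWalks n) :
    0 ≤ (l.sum).1 ∧ 0 ≤ (l.sum).2 := by
  obtain ⟨hlen, hLW⟩ := mem_allWalks.mp h
  have := hLW.2 l.length
  rwa [List.take_of_length_le le_rfl] at this

lemma coeff_Qgf (n : ℕ) : (PowerSeries.coeff (R := R2) n) (Qgf Ys) = cF n := by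
  rw [Qgf, PowerSeries.coeff_mk, cF]
  rw [← Finset.sum_fiberwise_of_maps_to (g := fun l : List (ℤ × ℤ) => l.sum)
    (t := Finset.Icc (0:ℤ) (n:ℤ) ×ˢ Finset.Icc (0:ℤ) (n:ℤ)) ?_ (fun l => mono l.sum)]
  · apply Finset.sum_congr rfl
    intro p _
    have : ∀ l ∈ (allWalks n).filter (fun l => l.sum = p), mono l.sum = mono p := by
      intro l hl
      rw [(Finset.mem_filter.mp hl).2]
    rw [Finset.sum_congr rfl this, Finset.sum_const, walkCountEnd_eq]
    rw [mono, show ∀ m : ℕ, ∀ v : R2, m • v = (m : ℚ) • v from fun m v => by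
      simp [Nat.cast_smul_eq_nsmul], AddMonoidAlgebra.smul_single]
    norm_num
  · intro l hl
    obtain ⟨hlen, hLW⟩ := mem_allWalks.mp hl
    have h1 := LW_sum_nonneg hl
    have h2 := sum_le_len hLW.1
    rw [Finset.mem_product, Finset.mem_Icc, Finset.mem_Icc]
    rw [hlen] at h2
    exact ⟨⟨h1.1, h2.1⟩, h1.2, h2.2⟩

lemma cF_zero : cF 0 = 1 := by
  have : allWalks 0 = {[]} := by
    ext l
    rw [mem_allWalks, Finset.mem_singleton]
    constructor
    · rintro ⟨h, -⟩; exact List.length_eq_zero_iff.mp h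
    · rintro rfl
      exact ⟨rfl, ⟨by simp, fun k => by simp⟩⟩
  rw [cF, this]
  simp only [Finset.sum_singleton, List.sum_nil]
  rw [mono, AddMonoidAlgebra.one_def]

lemma eF_zero : eF 0 = 1 := by
  have : allWalks 0 = {[]} := by
    ext l
    rw [mem_allWalks, Finset.mem_singleton]
    constructor
    · rintro ⟨h, -⟩; exact List.length_eq_zero_iff.mp h
    · rintro rfl
      exact ⟨rfl, ⟨by simp, fun k => by simp⟩⟩
  rw [eF, this]
  rw [Finset.filter_singleton, if_pos (by simp : ((([]:List (ℤ×ℤ)).sum).1 = 0))]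
  simp only [Finset.sum_singleton, List.sum_nil]
  rw [mono, AddMonoidAlgebra.one_def]

lemma mono_mul (p q : ℤ × ℤ) : mono p * mono q = mono (p + q) := by
  simp [mono, AddMonoidAlgebra.single_mul_single]

end
end QW

namespace QW
open Finset PowerSeries
open scoped Classical
noncomputable section

lemma LW_concat {l : List (ℤ × ℤ)} {s : ℤ × ℤ} (hl : LW l) (hs : s ∈ Ys)
    (h1 : 0 ≤ (l.sum + s).1) (h2 : 0 ≤ (l.sum + s).2) : LW (l ++ [s]) := by
  refine ⟨?_, fun k => ?_⟩
  · intro a ha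
    rcases List.mem_append.mp ha with h | h
    · exact hl.1 a h
    · rw [List.mem_singleton.mp h]; exact hs
  · by_cases hk : k ≤ l.length
    · rw [List.take_append_of_le_length hk]
      exact hl.2 k
    · rw [List.take_of_length_le (by simp; omega)]
      rw [List.sum_append, List.sum_singleton]
      exact ⟨h1, h2⟩

/-- The last-step (kernel) recurrence. -/
lemma cF_succ (n : ℕ) :
    cF (n + 1) = (mono (1,1) + mono (0,1) + mono (-1,-1)) * cF n - mono (-1,-1) * eF n := by
  have step1 : cF (n + 1) =
      ∑ q ∈ (allWalks n ×ˢ Ys).filter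
        (fun q => 0 ≤ (q.1.sum + q.2).1 ∧ 0 ≤ (q.1.sum + q.2).2),
        mono (q.1.sum + q.2) := by
    rw [cF]
    refine Finset.sum_bij'
      (fun a ha => (a.dropLast, a.getLast (by
        intro h
        have := (mem_allWalks.mp ha).1
        rw [h] at this
        simp at this)))
      (fun q _ => q.1 ++ [q.2]) ?_ ?_ ?_ ?_ ?_
    · -- maps to
      intro a ha
      obtain ⟨hlen, hLW⟩ := mem_allWalks.mp ha
      have hne : a ≠ [] := by
        intro h; rw [h] at hlen; simp at hlen
      rw [Finset.mem_filter, Finset.mem_product]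
      have hsplit : a.dropLast.sum + a.getLast hne = a.sum := by
        conv_rhs => rw [← List.dropLast_append_getLast hne]
        rw [List.sum_append, List.sum_singleton]
      refine ⟨⟨mem_allWalks.mpr ⟨by simp [hlen], ?_⟩, hLW.1 _ (List.getLast_mem hne)⟩, ?_⟩
      · show LW a.dropLast
        rw [List.dropLast_eq_take]
        exact LW_take hLW _
      · rw [hsplit]
        exact LW_sum_nonneg (mem_allWalks.mpr ⟨hlen, hLW⟩)
    · -- maps back
      intro q hq
      rw [Finset.mem_filter, Finset.mem_product] at hq
      obtain ⟨⟨hq1, hq2⟩, hpos⟩ := hq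
      obtain ⟨hlen, hLW⟩ := mem_allWalks.mp hq1
      exact mem_allWalks.mpr ⟨by simp [hlen], LW_concat hLW hq2 hpos.1 hpos.2⟩
    · -- left inverse
      intro a ha
      exact List.dropLast_append_getLast _
    · -- right inverse
      intro q hq
      simp [List.dropLast_concat]
    · -- weights
      intro a ha
      obtain ⟨hlen, hLW⟩ := mem_allWalks.mp ha
      have hne : a ≠ [] := by
        intro h; rw [h] at hlen; simp at hlen
      conv_lhs => rw [← List.dropLast_append_getLast hne]
      rw [List.sum_append, List.sum_singleton]
  rw [step1, Finset.sum_filter, Finset.sum_product]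
  have hY : ∀ f : ℤ × ℤ → R2, (∑ s ∈ Ys, f s) = f (1,1) + f (-1,-1) + f (0,1) := by
    intro f
    rw [show (Ys : Finset (ℤ×ℤ)) = insert (1,1) (insert (-1,-1) {(0,1)}) from rfl]
    rw [Finset.sum_insert (by decide), Finset.sum_insert (by decide), Finset.sum_singleton]
    ring
  have key : ∀ l ∈ allWalks n,
      (∑ s ∈ Ys, if 0 ≤ (l.sum + s).1 ∧ 0 ≤ (l.sum + s).2 then mono (l.sum + s) else 0)
      = mono (l.sum + (1,1)) + mono (l.sum + (0,1)) +
        (if (l.sum).1 = 0 then 0 else mono (l.sum + (-1,-1))) := by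
    intro l hl
    obtain ⟨h1, h2⟩ := LW_sum_nonneg hl
    have hge := snd_ge_fst (mem_allWalks.mp hl).2.1
    rw [hY]
    have e1 : (0:ℤ) ≤ (l.sum + ((1:ℤ),(1:ℤ))).1 ∧ (0:ℤ) ≤ (l.sum + ((1:ℤ),(1:ℤ))).2 := by
      simp only [Prod.fst_add, Prod.snd_add]
      constructor <;> omega
    have e3 : (0:ℤ) ≤ (l.sum + ((0:ℤ),(1:ℤ))).1 ∧ (0:ℤ) ≤ (l.sum + ((0:ℤ),(1:ℤ))).2 := by
      simp only [Prod.fst_add, Prod.snd_add]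
      constructor <;> omega
    rw [if_pos e1, if_pos e3]
    by_cases h0 : (l.sum).1 = 0
    · rw [if_neg (fun hc => by
        simp only [Prod.fst_add] at hc; omega), if_pos h0]
      ring
    · rw [if_pos (by
        simp only [Prod.fst_add, Prod.snd_add]
        constructor <;> omega), if_neg h0]
      ring
  rw [Finset.sum_congr rfl key]
  simp only [Finset.sum_add_distrib]
  have hm : ∀ s : ℤ × ℤ, (∑ l ∈ allWalks n, mono (l.sum + s)) = mono s * cF n := by
    intro s
    rw [cF, Finset.mul_sum]
    exact Finset.sum_congr rfl (fun l _ => by rw [mono_mul, add_comm])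
  have hmeF : (∑ l ∈ (allWalks n).filter (fun l => (l.sum).1 = 0), mono (l.sum + (-1,-1)))
      = mono (-1,-1) * eF n := by
    rw [eF, Finset.mul_sum]
    exact Finset.sum_congr rfl (fun l _ => by rw [mono_mul, add_comm])
  have hite : (∑ l ∈ allWalks n, if (l.sum).1 = 0 then 0 else mono (l.sum + (-1,-1)))
      = mono (-1,-1) * cF n - mono (-1,-1) * eF n := by
    have htot := Finset.sum_filter_add_sum_filter_not (allWalks n) (fun l => (l.sum).1 = 0)
      (fun l => mono (l.sum + (-1,-1)))
    have hsum : (∑ l ∈ allWalks n, if (l.sum).1 = 0 then 0 else mono (l.sum + (-1,-1)))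
        = ∑ l ∈ (allWalks n).filter (fun l => ¬ (l.sum).1 = 0), mono (l.sum + (-1,-1)) := by
      rw [Finset.sum_filter]
      exact Finset.sum_congr rfl (fun l _ => by by_cases h : (l.sum).1 = 0 <;> simp [h])
    have hB : (∑ l ∈ (allWalks n).filter (fun l => ¬ (l.sum).1 = 0), mono (l.sum + (-1,-1)))
        = (∑ l ∈ allWalks n, mono (l.sum + (-1,-1)))
          - ∑ l ∈ (allWalks n).filter (fun l => (l.sum).1 = 0), mono (l.sum + (-1,-1)) := by
      rw [← htot]; abel
    rw [hsum, hB, hm (-1,-1), hmeF]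
  rw [hm ((1:ℤ),(1:ℤ)), hm ((0:ℤ),(1:ℤ)), hite]
  ring
end
end QW

namespace QW
open Finset PowerSeries
open scoped Classical
noncomputable section

lemma glue_sum (l₁ l₂ : List (ℤ × ℤ)) :
    (l₁ ++ ((1:ℤ),(1:ℤ)) :: l₂).sum = l₁.sum + (((1:ℤ),(1:ℤ)) + l₂.sum) := by
  rw [List.sum_append, List.sum_cons]

lemma glue_pos {l₁ l₂ : List (ℤ × ℤ)} (h0 : (l₁.sum).1 = 0) (h₂ : LW l₂)
    {m : ℕ} (hm : l₁.length < m) :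
    0 < (((l₁ ++ ((1:ℤ),(1:ℤ)) :: l₂).take m).sum).1 := by
  obtain ⟨j, hj⟩ : ∃ j, m - l₁.length = j + 1 := ⟨m - l₁.length - 1, by omega⟩
  rw [List.take_append, List.take_of_length_le (by omega), hj,
    List.take_succ_cons, List.sum_append, List.sum_cons]
  have h2j := (h₂.2 j).1
  simp only [Prod.fst_add]
  omega

lemma LW_glue {l₁ l₂ : List (ℤ × ℤ)} (h₁ : LW l₁) (h0 : (l₁.sum).1 = 0) (h₂ : LW l₂) :
    LW (l₁ ++ ((1:ℤ),(1:ℤ)) :: l₂) := by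
  apply LW_of_fst
  · intro s hs
    rcases List.mem_append.mp hs with h | h
    · exact h₁.1 s h
    · rcases List.mem_cons.mp h with rfl | h
      · exact Finset.mem_insert_self _ _
      · exact h₂.1 s h
  · intro k
    by_cases hk : k ≤ l₁.length
    · rw [List.take_append_of_le_length hk]
      exact (h₁.2 k).1
    · exact le_of_lt (glue_pos h0 h₂ (by omega))

/-- facts about the split at the last visit to the wall `i = 0` -/
lemma split_facts {n : ℕ} {l : List (ℤ × ℤ)} (hlen : l.length = n) (hLW : LW l)
    (hne : (l.sum).1 ≠ 0) :
    Nat.findGreatest (fun m => ((l.take m).sum).1 = 0) n < n ∧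
    ((l.take (Nat.findGreatest (fun m => ((l.take m).sum).1 = 0) n)).sum).1 = 0 ∧
    (∀ m, Nat.findGreatest (fun m => ((l.take m).sum).1 = 0) n < m →
      0 < ((l.take m).sum).1) ∧
    l = l.take (Nat.findGreatest (fun m => ((l.take m).sum).1 = 0) n) ++
        ((1:ℤ),(1:ℤ)) :: l.drop (Nat.findGreatest (fun m => ((l.take m).sum).1 = 0) n + 1) ∧
    ((l.take (Nat.findGreatest (fun m => ((l.take m).sum).1 = 0) n + 1)).sum).1 = 1 := by
  set P : ℕ → Prop := fun m => ((l.take m).sum).1 = 0 with hP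
  set k := Nat.findGreatest P n with hk
  have hkn : k ≤ n := Nat.findGreatest_le n
  have hB : P k := Nat.findGreatest_spec (Nat.zero_le n) (by simp [hP])
  rw [hP] at hB
  have hA : k < n := by
    rcases Nat.lt_or_ge k n with h | h
    · exact h
    · exfalso
      have he : k = n := le_antisymm hkn h
      rw [he, ← hlen, List.take_of_length_le le_rfl] at hB
      exact hne hB
  have hC : ∀ m, k < m → 0 < ((l.take m).sum).1 := by
    intro m hm
    by_cases hmn : m ≤ n
    · have hnz := Nat.findGreatest_is_greatest hm hmn
      rw [hP] at hnz
      have := (hLW.2 m).1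
      omega
    · rw [List.take_of_length_le (by omega)]
      have := (LW_sum_nonneg (mem_allWalks.mpr ⟨hlen, hLW⟩)).1
      omega
  have hkl : k < l.length := by omega
  have hstep : l[k] = ((1:ℤ),(1:ℤ)) := by
    have hsum := List.sum_take_succ l k hkl
    have hpos := hC (k+1) (Nat.lt_succ_self k)
    rw [hsum] at hpos
    simp only [Prod.fst_add] at hpos
    have hmem := hLW.1 l[k] (List.getElem_mem hkl)
    rcases mem_Ys.mp hmem with h | h | h
    · exact h
    · exfalso; rw [h] at hpos; simp at hpos; omega
    · exfalso; rw [h] at hpos; simp at hpos; omega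
  refine ⟨hA, hB, hC, ?_, ?_⟩
  · conv_lhs => rw [← List.take_append_drop k l]
    rw [List.drop_eq_getElem_cons hkl, hstep]
  · rw [List.sum_take_succ l k hkl, hstep]
    simp only [Prod.fst_add]
    omega

/-- The splitting recurrence: decomposition at the last visit to `i = 0`. -/
lemma cF_split (n : ℕ) :
    cF n = eF n + ∑ k ∈ Finset.range n, eF k * mono (1,1) * cF (n - 1 - k) := by
  have htot := Finset.sum_filter_add_sum_filter_not (allWalks n) (fun l => (l.sum).1 = 0)
    (fun l => mono l.sum)
  have main : (∑ l ∈ (allWalks n).filter (fun l => ¬ (l.sum).1 = 0), mono l.sum)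
      = ∑ k ∈ Finset.range n, eF k * mono (1,1) * cF (n - 1 - k) := by
    have rhs : ∑ k ∈ Finset.range n, eF k * mono (1,1) * cF (n - 1 - k)
        = ∑ q ∈ (Finset.range n).sigma (fun k =>
            ((allWalks k).filter (fun l => (l.sum).1 = 0)) ×ˢ allWalks (n - 1 - k)),
            mono (q.2.1.sum + (((1:ℤ),(1:ℤ)) + q.2.2.sum)) := by
      rw [Finset.sum_sigma]
      apply Finset.sum_congr rfl
      intro k _
      rw [eF, cF, Finset.sum_mul, Finset.sum_mul_sum, Finset.sum_product]
      apply Finset.sum_congr rfl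
      intro l₁ _
      apply Finset.sum_congr rfl
      intro l₂ _
      rw [mono_mul, mono_mul]
      congr 1
      abel
    rw [rhs]
    refine Finset.sum_bij'
      (fun l hl => ⟨Nat.findGreatest (fun m => ((l.take m).sum).1 = 0) n,
        (l.take (Nat.findGreatest (fun m => ((l.take m).sum).1 = 0) n),
         l.drop (Nat.findGreatest (fun m => ((l.take m).sum).1 = 0) n + 1))⟩)
      (fun q _ => q.2.1 ++ ((1:ℤ),(1:ℤ)) :: q.2.2) ?_ ?_ ?_ ?_ ?_
    · -- maps to sigma
      intro l hl
      rw [Finset.mem_filter] at hl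
      obtain ⟨hlen, hLW⟩ := mem_allWalks.mp hl.1
      obtain ⟨hA, hB, hC, hD, hE⟩ := split_facts hlen hLW hl.2
      set k := Nat.findGreatest (fun m => ((l.take m).sum).1 = 0) n with hk
      simp only [Finset.mem_sigma, Finset.mem_product, Finset.mem_filter, Finset.mem_range]
      refine ⟨hA, ⟨mem_allWalks.mpr ⟨?_, LW_take hLW _⟩, hB⟩, ?_⟩
      · rw [List.length_take]
        omega
      · refine mem_allWalks.mpr ⟨?_, ?_⟩
        · rw [List.length_drop]
          omega
        · apply LW_of_fst
          · exact fun s hs => hLW.1 s (List.drop_subset _ _ hs)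
          · intro m
            have hsums : (l.take (k+1+m)).sum
                = (l.take (k+1)).sum + ((l.drop (k+1)).take m).sum := by
              rw [List.take_add, List.sum_append]
            have h1 := hC (k+1+m) (by omega)
            have := congrArg Prod.fst hsums
            simp only [Prod.fst_add] at this
            omega
    · -- maps back
      rintro ⟨k, l₁, l₂⟩ hq
      dsimp only
      simp only [Finset.mem_sigma, Finset.mem_product, Finset.mem_filter,
        Finset.mem_range] at hq
      obtain ⟨hk, ⟨hw1, h0⟩, hq22⟩ := hq
      obtain ⟨hlen1, hLW1⟩ := mem_allWalks.mp hw1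
      obtain ⟨hlen2, hLW2⟩ := mem_allWalks.mp hq22
      rw [Finset.mem_filter]
      refine ⟨mem_allWalks.mpr ⟨?_, LW_glue hLW1 h0 hLW2⟩, ?_⟩
      · simp only [List.length_append, List.length_cons]
        omega
      · rw [glue_sum]
        have := (LW_sum_nonneg hq22).1
        simp only [Prod.fst_add]
        omega
    · -- left inverse
      intro l hl
      dsimp only
      rw [Finset.mem_filter] at hl
      obtain ⟨hlen, hLW⟩ := mem_allWalks.mp hl.1
      obtain ⟨hA, hB, hC, hD, hE⟩ := split_facts hlen hLW hl.2
      exact hD.symm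
    · -- right inverse
      rintro ⟨k, l₁, l₂⟩ hq
      dsimp only
      simp only [Finset.mem_sigma, Finset.mem_product, Finset.mem_filter,
        Finset.mem_range] at hq
      obtain ⟨hk, ⟨hw1, h0⟩, hq22⟩ := hq
      obtain ⟨hlen1, hLW1⟩ := mem_allWalks.mp hw1
      obtain ⟨hlen2, hLW2⟩ := mem_allWalks.mp hq22
      have hfg : Nat.findGreatest
          (fun m => (((l₁ ++ ((1:ℤ),(1:ℤ)) :: l₂).take m).sum).1 = 0) n = k := by
        rw [Nat.findGreatest_eq_iff]
        refine ⟨by omega, fun _ => ?_, fun m hm hmn => ?_⟩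
        · rw [List.take_append_of_le_length (by omega), List.take_of_length_le (by omega)]
          exact h0
        · have := glue_pos h0 hLW2 (m := m) (by omega)
          omega
      have htk : (l₁ ++ ((1:ℤ),(1:ℤ)) :: l₂).take k = l₁ := by
        rw [List.take_append_of_le_length (by omega), List.take_of_length_le (by omega)]
      have hdk : (l₁ ++ ((1:ℤ),(1:ℤ)) :: l₂).drop (k+1) = l₂ := by
        rw [List.drop_append, List.drop_eq_nil_of_le (by omega)]
        have h1 : k + 1 - l₁.length = 1 := by omega
        rw [h1]
        simp
      simp only [hfg, htk, hdk]
    · -- weights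
      intro l hl
      dsimp only
      rw [Finset.mem_filter] at hl
      obtain ⟨hlen, hLW⟩ := mem_allWalks.mp hl.1
      obtain ⟨hA, hB, hC, hD, hE⟩ := split_facts hlen hLW hl.2
      conv_lhs => rw [hD]
      rw [glue_sum]
  rw [cF, ← htot, main, eF]

end
end QW

namespace QW
open Finset PowerSeries
open scoped Classical
noncomputable section

def Qs : PowerSeries R2 := PowerSeries.mk cF
def Es : PowerSeries R2 := PowerSeries.mk eF

lemma Qgf_eq : Qgf Ys = Qs := by
  apply PowerSeries.ext
  intro n
  rw [coeff_Qgf, Qs, PowerSeries.coeff_mk]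

lemma constCoeff_Qs : PowerSeries.constantCoeff (R := R2) Qs = 1 := by
  rw [Qs, ← PowerSeries.coeff_zero_eq_constantCoeff, PowerSeries.coeff_mk, cF_zero]

/-- kernel equation as a power-series identity -/
lemma hK' : Qs = 1 + PowerSeries.X * (PowerSeries.C (R := R2) (mono (1,1) + mono (0,1) + mono (-1,-1)) * Qs)
    - PowerSeries.X * (PowerSeries.C (R := R2) (mono (-1,-1)) * Es) := by
  apply PowerSeries.ext
  intro n
  rw [map_sub, map_add]
  cases n with
  | zero =>
    rw [PowerSeries.coeff_zero_eq_constantCoeff]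
    simp only [map_sub, map_add, map_mul, PowerSeries.constantCoeff_X, zero_mul, map_one]
    rw [Qs, ← PowerSeries.coeff_zero_eq_constantCoeff, PowerSeries.coeff_mk, cF_zero]
    ring
  | succ n =>
    rw [PowerSeries.coeff_succ_X_mul, PowerSeries.coeff_succ_X_mul,
      PowerSeries.coeff_C_mul, PowerSeries.coeff_C_mul]
    rw [Qs, Es, PowerSeries.coeff_mk, PowerSeries.coeff_mk, PowerSeries.coeff_mk, cF_succ]
    rw [PowerSeries.coeff_one, if_neg (Nat.succ_ne_zero n)]
    ring

/-- splitting equation as a power-series identity -/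
lemma hS' : Qs = Es + PowerSeries.X * (PowerSeries.C (R := R2) (mono (1,1)) * (Es * Qs)) := by
  apply PowerSeries.ext
  intro n
  rw [map_add]
  cases n with
  | zero =>
    rw [PowerSeries.coeff_zero_eq_constantCoeff]
    simp only [map_add, map_mul, PowerSeries.constantCoeff_X, zero_mul]
    rw [Qs, Es, ← PowerSeries.coeff_zero_eq_constantCoeff, PowerSeries.coeff_mk,
      PowerSeries.coeff_mk, cF_zero, eF_zero]
    ring
  | succ n =>
    rw [PowerSeries.coeff_succ_X_mul, PowerSeries.coeff_C_mul, PowerSeries.coeff_mul]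
    rw [Qs, Es, PowerSeries.coeff_mk, PowerSeries.coeff_mk]
    rw [Finset.Nat.sum_antidiagonal_eq_sum_range_succ_mk]
    simp only [PowerSeries.coeff_mk]
    rw [cF_split (n+1)]
    congr 1
    rw [Finset.mul_sum]
    apply Finset.sum_congr rfl
    intro k hk
    have : n + 1 - 1 - k = n - k := by omega
    rw [this]
    ring

end
end QW

namespace QW
open Finset PowerSeries
open scoped Classical
noncomputable section

lemma mono_zero_eq_one : mono 0 = 1 := by
  rw [mono, AddMonoidAlgebra.one_def]

lemma two_ne_zero_R2 : (2 : R2) ≠ 0 := by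
  haveI : CharZero R2 := charZero_of_injective_algebraMap (algebraMap ℚ R2).injective
  exact two_ne_zero

end
end QW


/-- For the step set `{NE, SW, N} = {(1,1),(-1,-1),(0,1)}` the complete
generating function `Q(x,y;t)` is algebraic over `ℚ(x,y,t)`; explicitly, with
`s = √(1 - 2yt + t²y² - 4t²)` (the power series in `t` with `s² = 1-2yt+t²y²-4t²`
and constant term `1`),
`t·(2t - yx + y²xt + yx·s) · Q(x,y;t) = -(-1 + yt + s)`. -/
theorem Qgf_NE_SW_N_algebraic :
    (∃ P : Polynomial (MvPolynomial (Fin 3) ℚ), P ≠ 0 ∧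
      Polynomial.eval₂
        (MvPolynomial.eval₂Hom ((PowerSeries.C (R := R2)).comp (algebraMap ℚ R2))
          (fun v : Fin 3 =>
            if v = 0 then PowerSeries.C (R := R2) (mono (1, 0))
            else if v = 1 then PowerSeries.C (R := R2) (mono (0, 1))
            else PowerSeries.X))
        (Qgf {((1:ℤ),(1:ℤ)), (-1,-1), (0,1)}) P = 0) ∧
    (∀ s : PowerSeries R2,
      s ^ 2 = 1 - 2 * PowerSeries.C (R := R2) (mono (0, 1)) * PowerSeries.X
          + PowerSeries.X ^ 2 * PowerSeries.C (R := R2) (mono (0, 1)) ^ 2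
          - 4 * PowerSeries.X ^ 2 →
      PowerSeries.constantCoeff (R := R2) s = 1 →
      PowerSeries.X *
          (2 * PowerSeries.X
            - PowerSeries.C (R := R2) (mono (0, 1)) * PowerSeries.C (R := R2) (mono (1, 0))
            + PowerSeries.C (R := R2) (mono (0, 1)) ^ 2 * PowerSeries.C (R := R2) (mono (1, 0)) *
                PowerSeries.X
            + PowerSeries.C (R := R2) (mono (0, 1)) * PowerSeries.C (R := R2) (mono (1, 0)) * s) *
          Qgf {((1:ℤ),(1:ℤ)), (-1,-1), (0,1)} =
        -(-1 + PowerSeries.C (R := R2) (mono (0, 1)) * PowerSeries.X + s)) := by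
  classical
  have hQ : Qgf {((1:ℤ),(1:ℤ)), (-1,-1), (0,1)} = QW.Qs := QW.Qgf_eq
  set x : PowerSeries R2 := PowerSeries.C (R := R2) (mono (1,0)) with hxdef
  set y : PowerSeries R2 := PowerSeries.C (R := R2) (mono (0,1)) with hydef
  set m : PowerSeries R2 := PowerSeries.C (R := R2) (mono (-1,-1)) with hmdef
  have hxy : PowerSeries.C (R := R2) (mono (1,1)) = x * y := by
    rw [hxdef, hydef, ← map_mul, QW.mono_mul]
    norm_num
  have hm1 : m * (x * y) = 1 := by
    rw [← hxy, hmdef, ← map_mul, QW.mono_mul,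
      show ((-1,-1) : ℤ × ℤ) + (1,1) = 0 from by norm_num [Prod.ext_iff],
      QW.mono_zero_eq_one, map_one]
  have h1 : QW.Qs = 1 + PowerSeries.X * ((x*y + y + m) * QW.Qs)
      - PowerSeries.X * (m * QW.Es) := by
    have h := QW.hK'
    rw [map_add, map_add, hxy] at h
    exact h
  have h2 : QW.Qs = QW.Es + PowerSeries.X * ((x*y) * (QW.Es * QW.Qs)) := by
    rw [← hxy]
    exact QW.hS'
  set X : PowerSeries R2 := PowerSeries.X with hXdef
  have hq : x*y*QW.Qs*(1 + X*(x*y)*QW.Qs)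
      - (x*y + X*((x*y)^2 + x*y^2 + 1)*QW.Qs)*(1 + X*(x*y)*QW.Qs) + X*QW.Qs = 0 := by
    linear_combination ((x*y)*(1 + X*(x*y)*QW.Qs)) * h1 + X * h2
      + (X*QW.Qs*(1 + X*(x*y)*QW.Qs) - X*QW.Es*(1 + X*(x*y)*QW.Qs)) * hm1
  constructor
  · refine ⟨Polynomial.C (MvPolynomial.X 2 * (MvPolynomial.X 0)^2 * (MvPolynomial.X 1)^2
        - (MvPolynomial.X 2)^2 * MvPolynomial.X 0 * MvPolynomial.X 1
        - (MvPolynomial.X 2)^2 * (MvPolynomial.X 0)^2 * (MvPolynomial.X 1)^3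
        - (MvPolynomial.X 2)^2 * (MvPolynomial.X 0)^3 * (MvPolynomial.X 1)^3) * Polynomial.X^2
      + Polynomial.C (MvPolynomial.X 0 * MvPolynomial.X 1
        - MvPolynomial.X 2 * MvPolynomial.X 0 * (MvPolynomial.X 1)^2
        - 2 * MvPolynomial.X 2 * (MvPolynomial.X 0)^2 * (MvPolynomial.X 1)^2) * Polynomial.X
      + Polynomial.C (-(MvPolynomial.X 0 * MvPolynomial.X 1)), ?_, ?_⟩
    · intro hP
      have h0 := congrArg (Polynomial.eval₂
        (MvPolynomial.eval (fun _ : Fin 3 => (1:ℚ))) 0) hP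
      simp [Polynomial.eval₂_add, Polynomial.eval₂_mul, Polynomial.eval₂_C,
        Polynomial.eval₂_X] at h0
    · rw [hQ]
      simp only [Polynomial.eval₂_add, Polynomial.eval₂_mul, Polynomial.eval₂_C,
        Polynomial.eval₂_X, Polynomial.eval₂_X_pow, Polynomial.eval₂_sub, Polynomial.eval₂_pow,
        Polynomial.eval₂_ofNat, Polynomial.eval₂_neg, map_sub, map_add, map_mul, map_neg,
        map_pow, map_ofNat, MvPolynomial.eval₂Hom_X']
      simp only [show ((2:Fin 3) = 0) = False from by decide,
        show ((2:Fin 3) = 1) = False from by decide,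
        show ((1:Fin 3) = 0) = False from by decide,
        if_true, if_false, ite_true, ite_false]
      linear_combination hq
  · intro s hs2 hs0
    rw [hQ]
    have hfac : (s*(X*x*y*QW.Qs + 1) + ((2*X^2 - X*x*y + X^2*x*y^2)*QW.Qs - 1 + y*X))
        * (s*(X*x*y*QW.Qs + 1) - ((2*X^2 - X*x*y + X^2*x*y^2)*QW.Qs - 1 + y*X)) = 0 := by
      linear_combination ((X*x*y*QW.Qs + 1)^2) * hs2 + (4*X^2*m) * hq
        + (-4*X^2*(-1 + QW.Qs - X*y*QW.Qs - 2*X*x*y*QW.Qs + X*x*y*QW.Qs^2 - X^2*QW.Qs^2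
            - X^2*x*y^2*QW.Qs^2 - X^2*x^2*y^2*QW.Qs^2)) * hm1
    have hne : s*(X*x*y*QW.Qs + 1) - ((2*X^2 - X*x*y + X^2*x*y^2)*QW.Qs - 1 + y*X) ≠ 0 := by
      intro h
      have hc := congrArg (PowerSeries.constantCoeff (R := R2)) h
      simp only [map_sub, map_add, map_mul, map_one, map_pow, map_ofNat, hXdef, hxdef, hydef,
        PowerSeries.constantCoeff_X, PowerSeries.constantCoeff_C, QW.constCoeff_Qs, hs0,
        map_zero] at hc
      apply QW.two_ne_zero_R2
      linear_combination hc
    have hz : s*(X*x*y*QW.Qs + 1) + ((2*X^2 - X*x*y + X^2*x*y^2)*QW.Qs - 1 + y*X) = 0 :=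
      (mul_eq_zero.mp hfac).resolve_right hne
    linear_combination hz
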